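/- For the polynomial P(X,Y) = X + Y − 1, the function V(x,y) = −D(x) defined on C = {(x, 1−x) : x ∈ ℂ \ {0,1}}, where D is the Bloch–Wigner dilogarithm, satisfies dV = η|_C = log|1−x| d(arg x) − log|x| d(arg(1−x)). Hence P is exact. -/

import Mathlib

/-- `η = log|y| d(arg x) − log|x| d(arg y)` as a continuous `ℝ`-linear functional. -/
noncomputable def etaL (p : ℂ × ℂ) : (ℂ × ℂ) →L[ℝ] ℝ :=
  Real.log (‖p.2‖) •
      (Complex.imCLM.comp ((p.1⁻¹ • ContinuousLinearMap.fst ℂ ℂ ℂ).restrictScalars ℝ)) -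
    Real.log (‖p.1‖) •
      (Complex.imCLM.comp ((p.2⁻¹ • ContinuousLinearMap.snd ℂ ℂ ℂ).restrictScalars ℝ))

/-- The differential of the Bloch–Wigner dilogarithm:
`dD(z)(w) = log|z|·(d arg(1−z))(w) − log|1−z|·(d arg z)(w)
          = log|z|·Im(−w/(1−z)) − log|1−z|·Im(w/z)`. -/
noncomputable def dBW (z : ℂ) : ℂ →L[ℝ] ℝ :=
  Real.log (‖z‖) •
      (Complex.imCLM.comp (((-(1 - z)⁻¹) • ContinuousLinearMap.id ℂ ℂ).restrictScalars ℝ)) -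
    Real.log (‖1 - z‖) •
      (Complex.imCLM.comp ((z⁻¹ • ContinuousLinearMap.id ℂ ℂ).restrictScalars ℝ))

lemma key (x u : ℂ) : etaL (x, 1 - x) (u, -u) = (-(dBW x)) u := by
  simp [etaL, dBW, smul_eq_mul, mul_neg, neg_mul]

/-- For `P = X + Y − 1`: the function `V(x,y) = −D(x)` (with `D` the Bloch–Wigner
dilogarithm, characterised by its differential `dBW`) satisfies
`dV = η|_C = log|1−x| d(arg x) − log|x| d(arg(1−x))` on the curve `y = 1 − x`,
where the tangent map of the parametrization `x ↦ (x, 1−x)` is `u ↦ (u, −u)`.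
Hence `P` is exact. -/
theorem smyth_curve_exact
    (D : ℂ → ℝ) (hD : ∀ z : ℂ, z ≠ 0 → z ≠ 1 → HasFDerivAt D (dBW z) z) :
    (∀ x : ℂ, x ≠ 0 → x ≠ 1 →
      HasFDerivAt (fun w : ℂ => -D w)
        ((etaL (x, 1 - x)).comp
          (((ContinuousLinearMap.id ℂ ℂ).prod
              (-(ContinuousLinearMap.id ℂ ℂ))).restrictScalars ℝ)) x) ∧
    (∃ V : ℂ × ℂ → ℝ,
      ∀ z ∈ {w : ℂ × ℂ | w.1 ≠ 0 ∧ w.2 ≠ 0 ∧ w.1 + w.2 = 1},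
        HasFDerivWithinAt V (etaL z)
          {w : ℂ × ℂ | w.1 ≠ 0 ∧ w.2 ≠ 0 ∧ w.1 + w.2 = 1} z) := by
  constructor
  · intro x h0 h1
    have h := (hD x h0 h1).neg
    refine h.congr_fderiv ?_
    ext u
    simpa using (key x u).symm
  · refine ⟨fun w => -D w.1, ?_⟩
    rintro z ⟨h0, h2, hsum⟩
    have hz2 : z.2 = 1 - z.1 := by linear_combination hsum
    have hz1 : z.1 ≠ 1 := by
      intro h; apply h2; rw [hz2, h]; ring
    set S : Set (ℂ × ℂ) := {w : ℂ × ℂ | w.1 ≠ 0 ∧ w.2 ≠ 0 ∧ w.1 + w.2 = 1}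
    have hd : HasFDerivAt (fun w : ℂ × ℂ => -D w.1)
        ((-(dBW z.1)).comp (ContinuousLinearMap.fst ℝ ℂ ℂ)) z :=
      ((hD z.1 h0 hz1).neg).comp z (hasFDerivAt_fst)
    have h1 := hd.hasFDerivWithinAt (s := S)
    rw [HasFDerivWithinAt, hasFDerivAtFilter_iff_isLittleO] at h1 ⊢
    refine h1.congr' ?_ (Filter.EventuallyEq.rfl)
    filter_upwards [Filter.prod_mem_prod self_mem_nhdsWithin (Filter.mem_pure.2 (Set.mem_singleton z))] with ⟨w, z'⟩ ⟨hw, hz'⟩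
    simp only [Set.mem_singleton_iff] at hz'
    rw [hz']
    have hw2 : w.2 = 1 - w.1 := by linear_combination hw.2.2
    have : etaL z (w - z) = (-(dBW z.1)) (w.1 - z.1) := by
      have : w - z = (w.1 - z.1, -(w.1 - z.1)) := by
        ext <;> simp [hw2, hz2]
      rw [this]
      have hez : etaL z = etaL (z.1, 1 - z.1) := by rw [← hz2]
      rw [hez, key]
    simp [this]
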